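/- Let P : A ⥤ A be a generating endofunctor of an abelian category A with Nakayama functor ν relative to P, right adjoint ν⁻, and I = ν ∘ P. Then P is a faithful functor. -/
import Mathlib


open CategoryTheory Category Limits

/-- Let `P : A ⥤ A` be a generating endofunctor of an abelian category
with a Nakayama functor `ν` relative to `P` (i.e. `ν ⊣ ν⁻`, `I = ν ∘ P` is right
adjoint to `P`, and the unit of `ν ⊣ ν⁻` is invertible on the image of `P`).
Then `P` is faithful. -/
theorem nakayama_P_faithful {A : Type*} [Category A] [Abelian A]
    (P ν νinv : A ⥤ A)
    (hgen : ∀ X : A, ∃ (Y : A) (p : P.obj Y ⟶ X), Epi p)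
    (adjν : ν ⊣ νinv)
    (adjP : P ⊣ (P ⋙ ν))
    (hunit : ∀ X : A, IsIso (adjν.unit.app (P.obj X))) :
    P.Faithful := by
  constructor
  intro X Y f g hfg
  obtain ⟨Z, p, hp⟩ := hgen X
  -- `P (η_Y)` is a split mono by the triangle identity, hence so is `(P ⋙ ν).map η_Y`.
  haveI hsm : IsSplitMono (P.map (adjP.unit.app Y)) :=
    IsSplitMono.mk' ⟨adjP.counit.app (P.obj Y), adjP.left_triangle_components Y⟩
  haveI hmono : Mono ((P ⋙ ν).map (adjP.unit.app Y)) := by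
    haveI : IsSplitMono (ν.map (P.map (adjP.unit.app Y))) :=
      IsSplitMono.mk' (hsm.exists_splitMono.some.map ν)
    exact IsSplitMono.mono (ν.map (P.map (adjP.unit.app Y)))
  -- From `P f = P g`, naturality of the unit gives `f ≫ η_Y = g ≫ η_Y`.
  have hnat : f ≫ adjP.unit.app Y = g ≫ adjP.unit.app Y := by
    have nf := adjP.unit.naturality f
    have ng := adjP.unit.naturality g
    simp only [Functor.id_map, Functor.comp_map] at nf ng
    rw [nf, ng, hfg]
  have h1 : (p ≫ f) ≫ adjP.unit.app Y = (p ≫ g) ≫ adjP.unit.app Y := by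
    rw [assoc, assoc, hnat]
  have h2 : (adjP.homEquiv Z Y) (p ≫ f) ≫ (P ⋙ ν).map (adjP.unit.app Y)
      = (adjP.homEquiv Z Y) (p ≫ g) ≫ (P ⋙ ν).map (adjP.unit.app Y) := by
    rw [← adjP.homEquiv_naturality_right, ← adjP.homEquiv_naturality_right, h1]
  have h3 : (adjP.homEquiv Z Y) (p ≫ f) = (adjP.homEquiv Z Y) (p ≫ g) :=
    (cancel_mono _).mp h2
  have h4 : p ≫ f = p ≫ g := (adjP.homEquiv Z Y).injective h3
  exact (cancel_epi p).mp h4
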